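/- Expressiveness gap without assignments: over the schema with a nullary relation S and a binary relation T of input arity one, fix the instance D with D(S) nonempty and D(T) = ∅. Then (1) for every FLIF expression β without assignment atoms, either ⟦β⟧_D = ∅ or ⟦β⟧_D = ⟦γ⟧_D for some assignment-free expression γ not mentioning T; and (2) for every assignment-free expression γ not mentioning T and every (ν₁,ν₂) ∈ ⟦γ⟧_D, we have ν₁ = ν₂. Consequently, no assignment-free FLIF expression β satisfies: for every valuation ν there exists ν′ with ν′(x₁) = ν(x) and (ν, ν′) ∈ ⟦β⟧_D, where x ≠ x₁ are distinct variables (i.e., the io-disjoint rewriting of S(;) ∪ T(x;x) with x renamed to x₁ cannot avoid variable assignment). -/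
import Mathlib


/-- Assignment-free FLIF expressions over the schema with a nullary relation
`S` and a binary relation `T` of input arity one. -/
-- (auxiliary lemmas are added below, before the main theorem)
inductive AFExp (V D : Type) : Type
  | S
  | T (u v : V)
  | eqVar (x y : V)
  | eqConst (x : V) (c : D)
  | comp (a b : AFExp V D)
  | union (a b : AFExp V D)
  | diff (a b : AFExp V D)

namespace AFExp

variable {V D : Type}

/-- Semantics over the fixed instance `D` with `D(S)` nonempty and `D(T) = ∅`:
`⟦S(;)⟧` is the identity relation on valuations, `⟦T(u;v)⟧` is empty. -/
def sem : AFExp V D → (V → D) → (V → D) → Prop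
  | S, ν₁, ν₂ => ν₁ = ν₂
  | T _ _, _, _ => False
  | eqVar x y, ν₁, ν₂ => ν₁ = ν₂ ∧ ν₁ x = ν₁ y
  | eqConst x c, ν₁, ν₂ => ν₁ = ν₂ ∧ ν₁ x = c
  | comp a b, ν₁, ν₂ => ∃ ν, sem a ν₁ ν ∧ sem b ν ν₂
  | union a b, ν₁, ν₂ => sem a ν₁ ν₂ ∨ sem b ν₁ ν₂
  | diff a b, ν₁, ν₂ => sem a ν₁ ν₂ ∧ ¬ sem b ν₁ ν₂

/-- The expression mentions the relation `T`. -/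
def mentionsT : AFExp V D → Prop
  | T _ _ => True
  | comp a b => mentionsT a ∨ mentionsT b
  | union a b => mentionsT a ∨ mentionsT b
  | diff a b => mentionsT a ∨ mentionsT b
  | _ => False

/-- Part (2): `T`-free expressions only define identical pairs. -/
theorem sem_eq_of_not_mentionsT :
    ∀ γ : AFExp V D, ¬ mentionsT γ →
      ∀ ν₁ ν₂ : V → D, sem γ ν₁ ν₂ → ν₁ = ν₂ := by
  intro γ
  induction γ with
  | S => intro _ ν₁ ν₂ h; exact h
  | T u v => intro _ _ _ h; exact h.elim
  | eqVar a b => intro _ _ _ h; exact h.1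
  | eqConst a c => intro _ _ _ h; exact h.1
  | comp a b iha ihb =>
      intro hm ν₁ ν₂ h
      obtain ⟨ν, h1, h2⟩ := h
      have hma : ¬ mentionsT a := fun h => hm (Or.inl h)
      have hmb : ¬ mentionsT b := fun h => hm (Or.inr h)
      exact (iha hma ν₁ ν h1).trans (ihb hmb ν ν₂ h2)
  | union a b iha ihb =>
      intro hm ν₁ ν₂ h
      rcases h with h | h
      · exact iha (fun h' => hm (Or.inl h')) ν₁ ν₂ h
      · exact ihb (fun h' => hm (Or.inr h')) ν₁ ν₂ h
  | diff a b iha ihb =>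
      intro hm ν₁ ν₂ h
      exact iha (fun h' => hm (Or.inl h')) ν₁ ν₂ h.1

/-- Part (1): every expression is empty or equivalent to a `T`-free one. -/
theorem empty_or_equiv_Tfree :
    ∀ β : AFExp V D,
      (∀ ν₁ ν₂ : V → D, ¬ sem β ν₁ ν₂) ∨
      ∃ γ : AFExp V D, ¬ mentionsT γ ∧
        ∀ ν₁ ν₂ : V → D, sem β ν₁ ν₂ ↔ sem γ ν₁ ν₂ := by
  intro β
  induction β with
  | S => exact Or.inr ⟨.S, not_false, fun _ _ => Iff.rfl⟩
  | T u v => exact Or.inl fun _ _ h => h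
  | eqVar a b => exact Or.inr ⟨.eqVar a b, not_false, fun _ _ => Iff.rfl⟩
  | eqConst a c => exact Or.inr ⟨.eqConst a c, not_false, fun _ _ => Iff.rfl⟩
  | comp a b iha ihb =>
      rcases iha with ha | ⟨γa, hma, ha⟩
      · exact Or.inl fun ν₁ ν₂ ⟨ν, h1, _⟩ => ha ν₁ ν h1
      rcases ihb with hb | ⟨γb, hmb, hb⟩
      · exact Or.inl fun ν₁ ν₂ ⟨ν, _, h2⟩ => hb ν ν₂ h2
      · refine Or.inr ⟨.comp γa γb, ?_, ?_⟩
        · intro h; rcases h with h | h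
          exacts [hma h, hmb h]
        · intro ν₁ ν₂
          constructor
          · rintro ⟨ν, h1, h2⟩; exact ⟨ν, (ha _ _).1 h1, (hb _ _).1 h2⟩
          · rintro ⟨ν, h1, h2⟩; exact ⟨ν, (ha _ _).2 h1, (hb _ _).2 h2⟩
  | union a b iha ihb =>
      rcases iha with ha | ⟨γa, hma, ha⟩
      · rcases ihb with hb | ⟨γb, hmb, hb⟩
        · exact Or.inl fun ν₁ ν₂ h => h.elim (ha ν₁ ν₂) (hb ν₁ ν₂)
        · refine Or.inr ⟨γb, hmb, fun ν₁ ν₂ => ?_⟩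
          constructor
          · intro h; rcases h with h | h
            exacts [absurd h (ha _ _), (hb _ _).1 h]
          · intro h; exact Or.inr ((hb _ _).2 h)
      · rcases ihb with hb | ⟨γb, hmb, hb⟩
        · refine Or.inr ⟨γa, hma, fun ν₁ ν₂ => ?_⟩
          constructor
          · intro h; rcases h with h | h
            exacts [(ha _ _).1 h, absurd h (hb _ _)]
          · intro h; exact Or.inl ((ha _ _).2 h)
        · refine Or.inr ⟨.union γa γb, ?_, fun ν₁ ν₂ => ?_⟩
          · intro h; rcases h with h | h
            exacts [hma h, hmb h]
          · exact or_congr (ha _ _) (hb _ _)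
  | diff a b iha ihb =>
      rcases iha with ha | ⟨γa, hma, ha⟩
      · exact Or.inl fun ν₁ ν₂ h => ha ν₁ ν₂ h.1
      rcases ihb with hb | ⟨γb, hmb, hb⟩
      · refine Or.inr ⟨γa, hma, fun ν₁ ν₂ => ?_⟩
        constructor
        · intro h; exact (ha _ _).1 h.1
        · intro h; exact ⟨(ha _ _).2 h, hb _ _⟩
      · refine Or.inr ⟨.diff γa γb, ?_, fun ν₁ ν₂ => ?_⟩
        · intro h; rcases h with h | h
          exacts [hma h, hmb h]
        · exact and_congr (ha _ _) (not_congr (hb _ _))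

end AFExp

/-- Expressiveness gap without assignments, over the instance with `D(S)`
nonempty and `D(T) = ∅`:
(1) every assignment-free expression `β` has empty semantics or the same
semantics as some assignment-free expression `γ` not mentioning `T`;
(2) assignment-free expressions not mentioning `T` only define identical pairs;
consequently, no assignment-free expression `β` satisfies
`∀ ν ∃ ν', ν'(x₁) = ν(x) ∧ (ν, ν') ∈ ⟦β⟧_D` (for distinct variables `x ≠ x₁`),
i.e., the io-disjoint rewriting of `S(;) ∪ T(x;x)` (renaming `x` to `x₁`)
cannot avoid variable assignment. -/
theorem no_assignment_free_rewriting {V D : Type} [Nontrivial D]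
    (x x₁ : V) (hx : x ≠ x₁) :
    (∀ β : AFExp V D,
        (∀ ν₁ ν₂ : V → D, ¬ AFExp.sem β ν₁ ν₂) ∨
        ∃ γ : AFExp V D, ¬ AFExp.mentionsT γ ∧
          ∀ ν₁ ν₂ : V → D, AFExp.sem β ν₁ ν₂ ↔ AFExp.sem γ ν₁ ν₂) ∧
    (∀ γ : AFExp V D, ¬ AFExp.mentionsT γ →
        ∀ ν₁ ν₂ : V → D, AFExp.sem γ ν₁ ν₂ → ν₁ = ν₂) ∧
    (∀ β : AFExp V D,
        ¬ ∀ ν : V → D, ∃ ν' : V → D, ν' x₁ = ν x ∧ AFExp.sem β ν ν') := by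
  refine ⟨AFExp.empty_or_equiv_Tfree, AFExp.sem_eq_of_not_mentionsT, ?_⟩
  intro β h
  classical
  obtain ⟨a, b, hab⟩ := exists_pair_ne D
  set ν : V → D := fun v => if v = x then a else b with hν
  obtain ⟨ν', hx₁, hsem⟩ := h ν
  rcases AFExp.empty_or_equiv_Tfree β with hemp | ⟨γ, hmγ, hγ⟩
  · exact hemp ν ν' hsem
  · have : ν = ν' := AFExp.sem_eq_of_not_mentionsT γ hmγ ν ν' ((hγ ν ν').1 hsem)
    have h1 : ν' x₁ = b := by rw [← this]; simp [hν, (Ne.symm hx)]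
    have h2 : ν x = a := by simp [hν]
    rw [h1, h2] at hx₁
    exact hab hx₁.symm
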